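/- Over the field F₂ with two elements, the function (x,y) ↦ 1 + x·y on F₂ × F₂ cannot be written as a hypercube sum of a product of affine linear forms: there do not exist natural numbers n, m and affine linear maps ℓ_1,…,ℓ_m : F₂^{2+n} → F₂ such that for all x, y ∈ F₂ one has 1 + x·y = ∑_{b ∈ F₂^n} ∏_{i=1}^m ℓ_i(x, y, b). (Consequently VNP_1(F₂) ⊊ VNP(F₂).) -/

import Mathlib

open MvPolynomial

noncomputable section

/-- A function `ℕ → ℕ` is polynomially bounded. -/
def PolyBounded (f : ℕ → ℕ) : Prop := ∃ c : ℕ, ∀ n, f n ≤ (n + 2) ^ c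

/-- A sequence of multivariate polynomials is a family: `f n` uses only variables `x_i`
with `i < v n`, for a polynomially bounded `v`. -/
def IsPolyFamily {F : Type} [CommSemiring F] (f : ℕ → MvPolynomial ℕ F) : Prop :=
  ∃ v : ℕ → ℕ, PolyBounded v ∧ ∀ n, ∀ i ∈ (f n).vars, i < v n

/-- Arithmetic formulas over `F` in variables `x_i`, `i : ℕ`: expressions built from
variables and constants by binary additions and multiplications. -/
inductive Formula (F : Type) where
  | var : ℕ → Formula F
  | const : F → Formula F
  | add : Formula F → Formula F → Formula F
  | mul : Formula F → Formula F → Formula F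

namespace Formula

variable {F : Type} [CommSemiring F]

/-- The polynomial computed by an arithmetic formula. -/
def eval : Formula F → MvPolynomial ℕ F
  | var i => X i
  | const c => C c
  | add φ ψ => φ.eval + ψ.eval
  | mul φ ψ => φ.eval * ψ.eval

/-- The size of a formula: the number of (binary) operations. -/
def size : Formula F → ℕ
  | var _ => 0
  | const _ => 0
  | add φ ψ => φ.size + ψ.size + 1
  | mul φ ψ => φ.size + ψ.size + 1

/-- The depth of a formula: the length of the longest root-to-leaf path. -/
def depth : Formula F → ℕ
  | var _ => 0
  | const _ => 0
  | add φ ψ => max φ.depth ψ.depth + 1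
  | mul φ ψ => max φ.depth ψ.depth + 1

end Formula

/-- A general affine linear form `∑ αᵢ xᵢ + β`, i.e. a polynomial of total degree ≤ 1. -/
def IsGenForm {F : Type} [CommSemiring F] (p : MvPolynomial ℕ F) : Prop := p.totalDegree ≤ 1

/-- A single variable or a constant. -/
def IsWeakestForm {F : Type} [CommSemiring F] (p : MvPolynomial ℕ F) : Prop :=
  (∃ i, p = X i) ∨ ∃ c, p = C c

/-- A simple affine linear form `α·xᵢ + β`. -/
def IsWeakForm {F : Type} [CommSemiring F] (p : MvPolynomial ℕ F) : Prop :=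
  ∃ (α β : F) (i : ℕ), p = C α * X i + C β

/-- An affine linear form in at most two variables, `α·xᵢ + β·xⱼ + γ`. -/
def IsWeakPlusForm {F : Type} [CommSemiring F] (p : MvPolynomial ℕ F) : Prop :=
  ∃ (α β γ : F) (i j : ℕ), p = C α * X i + C β * X j + C γ

/-- `ABPComputes form k s p`: some width-`k` algebraic branching program of size `s`, all of
whose matrix entries satisfy the predicate `form`, computes the polynomial `p`; that is,
`p = vᵀ · M_s ⋯ M_1 · w` for vectors `v, w ∈ F^k` and matrices `M_i` with entries of
type `form`. -/
def ABPComputes {F : Type} [CommSemiring F] (form : MvPolynomial ℕ F → Prop)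
    (k s : ℕ) (p : MvPolynomial ℕ F) : Prop :=
  ∃ (v w : Fin k → F) (M : Fin s → Matrix (Fin k) (Fin k) (MvPolynomial ℕ F)),
    (∀ (i : Fin s) (a b : Fin k), form (M i a b)) ∧
    p = dotProduct (fun a => C (v a))
          (Matrix.mulVec (List.ofFn M).prod fun a => C (w a))

/-- The class `VP_k^*`: families computable by width-`k` ABPs, with entries of label
type `form`, of polynomially bounded size. -/
def VPkClass (F : Type) [CommSemiring F] (k : ℕ)
    (form : MvPolynomial ℕ F → Prop) : Set (ℕ → MvPolynomial ℕ F) :=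
  { f | IsPolyFamily f ∧
        ∃ s : ℕ → ℕ, PolyBounded s ∧ ∀ n, ∃ s' ≤ s n, ABPComputes form k s' (f n) }

/-- The class `VPe`: families computable by arithmetic formulas of polynomially
bounded size. -/
def VPe (F : Type) [CommSemiring F] : Set (ℕ → MvPolynomial ℕ F) :=
  { f | IsPolyFamily f ∧
        ∃ s : ℕ → ℕ, PolyBounded s ∧ ∀ n, ∃ φ : Formula F, φ.size ≤ s n ∧ φ.eval = f n }

/-- The inclusion `F[x] → F(ε)[x]`. -/
def liftε (F : Type) [Field F] : MvPolynomial ℕ F →+* MvPolynomial ℕ (RatFunc F) :=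
  MvPolynomial.map (algebraMap F (RatFunc F))

/-- The inclusion `F[ε][x] → F(ε)[x]`. -/
def liftPolyε (F : Type) [Field F] :
    MvPolynomial ℕ (Polynomial F) →+* MvPolynomial ℕ (RatFunc F) :=
  MvPolynomial.map (algebraMap (Polynomial F) (RatFunc F))

/-- The approximation closure of a class `Cl` given over `F(ε)`: families `(f_n)` over `F`
for which there are error polynomials `f_{n;1}, …, f_{n;e(n)}` over `F` such that the family
`g_n = f_n + ε f_{n;1} + ⋯ + ε^{e(n)} f_{n;e(n)}` belongs to `Cl` over `F(ε)`. -/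
def ApproxClosure (F : Type) [Field F]
    (Cl : Set (ℕ → MvPolynomial ℕ (RatFunc F))) : Set (ℕ → MvPolynomial ℕ F) :=
  { f | IsPolyFamily f ∧ ∃ (e : ℕ → ℕ) (ferr : ℕ → ℕ → MvPolynomial ℕ F),
      (fun n => liftε F (f n) + ∑ i ∈ Finset.range (e n),
          C ((RatFunc.X : RatFunc F) ^ (i + 1)) * liftε F (ferr n i)) ∈ Cl }

/-- The poly-approximation closure: as `ApproxClosure`, with the error degree `e(n)`
additionally required to be polynomially bounded. -/
def PolyApproxClosure (F : Type) [Field F]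
    (Cl : Set (ℕ → MvPolynomial ℕ (RatFunc F))) : Set (ℕ → MvPolynomial ℕ F) :=
  { f | IsPolyFamily f ∧ ∃ e : ℕ → ℕ, PolyBounded e ∧
      ∃ ferr : ℕ → ℕ → MvPolynomial ℕ F,
      (fun n => liftε F (f n) + ∑ i ∈ Finset.range (e n),
          C ((RatFunc.X : RatFunc F) ^ (i + 1)) * liftε F (ferr n i)) ∈ Cl }

/-- The hypercube sum `∑_{b ∈ {0,1}^p} g(b, x)`: the first `p` variables of `g` are summed
over all Boolean assignments, and variable `p + i` of `g` is renamed to `x_i`. -/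
def hcSum {F : Type} [CommSemiring F] (p : ℕ) (g : MvPolynomial ℕ F) : MvPolynomial ℕ F :=
  ∑ b : Fin p → Bool,
    MvPolynomial.aeval
      (fun i : ℕ => if h : i < p then (if b ⟨i, h⟩ then 1 else 0) else X (i - p)) g

/-- The nondeterminism closure `N(Cl)`: families `(f_n)` with
`f_n(x) = ∑_{b ∈ {0,1}^{p(n)}} g_{q(n)}(b,x)` for some `(g_n) ∈ Cl` and polynomially
bounded `p`, `q`. -/
def Nclosure {F : Type} [CommSemiring F] (Cl : Set (ℕ → MvPolynomial ℕ F)) :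
    Set (ℕ → MvPolynomial ℕ F) :=
  { f | IsPolyFamily f ∧ ∃ g ∈ Cl, ∃ p q : ℕ → ℕ, PolyBounded p ∧ PolyBounded q ∧
        ∀ n, f n = hcSum (p n) (g (q n)) }

/-- The matrix `Q(f) = [[f, 1], [1, 0]]`. -/
def Qmat {R : Type} [CommSemiring R] (f : MvPolynomial ℕ R) :
    Matrix (Fin 2) (Fin 2) (MvPolynomial ℕ R) := !![f, 1; 1, 0]

/-- A primitive Q-matrix: `Q(ℓ)` for a parametrized affine linear form `ℓ`, i.e. an affine
linear form in the `x`-variables with coefficients in `F(ε)`. -/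
def IsPrimitiveQ (F : Type) [Field F]
    (M : Matrix (Fin 2) (Fin 2) (MvPolynomial ℕ (RatFunc F))) : Prop :=
  ∃ ℓ : MvPolynomial ℕ (RatFunc F), ℓ.totalDegree ≤ 1 ∧ M = Qmat ℓ

/-- `M` can be written as a product of `n` primitive Q-matrices. -/
def IsProdPrimQ (F : Type) [Field F] (n : ℕ)
    (M : Matrix (Fin 2) (Fin 2) (MvPolynomial ℕ (RatFunc F))) : Prop :=
  ∃ L : Fin n → Matrix (Fin 2) (Fin 2) (MvPolynomial ℕ (RatFunc F)),
    (∀ i, IsPrimitiveQ F (L i)) ∧ M = (List.ofFn L).prod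

/-- `M ∈ Q(f) + O(ε^k)`: `M = Q(f) + ε^k · E` for some matrix `E` with entries
in `F[ε][x]`. -/
def InQErr (F : Type) [Field F] (f : MvPolynomial ℕ F) (k : ℕ)
    (M : Matrix (Fin 2) (Fin 2) (MvPolynomial ℕ (RatFunc F))) : Prop :=
  ∃ E : Matrix (Fin 2) (Fin 2) (MvPolynomial ℕ (Polynomial F)),
    M = Qmat (liftε F f) +
      (C ((RatFunc.X : RatFunc F) ^ k) : MvPolynomial ℕ (RatFunc F)) • E.map (liftPolyε F)

/-- `M` has entries in `F[ε][x]` and error degree at most `e`: every entry has degree at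
most `e` in `ε`. -/
def ErrDegLE (F : Type) [Field F]
    (M : Matrix (Fin 2) (Fin 2) (MvPolynomial ℕ (RatFunc F))) (e : ℕ) : Prop :=
  ∃ E : Matrix (Fin 2) (Fin 2) (MvPolynomial ℕ (Polynomial F)),
    M = E.map (liftPolyε F) ∧
    ∀ (a b : Fin 2) (m : ℕ →₀ ℕ), (MvPolynomial.coeff m (E a b)).natDegree ≤ e

/-- The generalized Fibonacci polynomials: `F_0 = 1`, `F_1 = x_1`,
`F_n = x_n · F_{n-1} + F_{n-2}` (variables indexed from 0). -/
def fibPoly (R : Type) [CommSemiring R] : ℕ → MvPolynomial ℕ R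
  | 0 => 1
  | 1 => X 0
  | n + 2 => X (n + 1) * fibPoly R (n + 1) + fibPoly R n

/-- `f` is a degeneration of the Fibonacci polynomial `F_m` witnessing border Fibonacci
complexity at most `m`: there are parametrized affine linear forms `ℓ_1, …, ℓ_m` with
`F_m(ℓ_1, …, ℓ_m) = f + ε·g` for some `g ∈ F[ε][x]`. -/
def FibBorderProj (F : Type) [Field F] (f : MvPolynomial ℕ F) (m : ℕ) : Prop :=
  ∃ ℓ : ℕ → MvPolynomial ℕ (RatFunc F),
    (∀ i, (ℓ i).totalDegree ≤ 1) ∧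
    ∃ g : MvPolynomial ℕ (Polynomial F),
      MvPolynomial.aeval ℓ (fibPoly (RatFunc F) m) =
        liftε F f + C (RatFunc.X : RatFunc F) * liftPolyε F g


/-! ### Auxiliary lemmas for Statement 19 -/

section Aux

open Finsupp in
lemma aux_finsupp_deg_le_one (m : ℕ →₀ ℕ) (h : (m.sum fun _ e => e) ≤ 1) :
    m = 0 ∨ ∃ j, m = Finsupp.single j 1 := by
  by_cases hm : m = 0
  · exact Or.inl hm
  · right
    obtain ⟨j, hj⟩ := Finsupp.support_nonempty_iff.2 hm
    have hj1 : 1 ≤ m j := Nat.one_le_iff_ne_zero.2 (Finsupp.mem_support_iff.1 hj)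
    have hsub : m.support ⊆ {j} := by
      intro k hk
      by_contra hkj
      simp only [Finset.mem_singleton] at hkj
      have h2 : ({j, k} : Finset ℕ) ⊆ m.support := by
        intro t ht; simp at ht
        rcases ht with rfl | rfl
        · exact hj
        · exact hk
      have h3 := Finset.sum_le_sum_of_subset (f := fun k => m k) h2
      rw [Finset.sum_pair (Ne.symm hkj)] at h3
      have hk1 : 1 ≤ m k := Nat.one_le_iff_ne_zero.2 (Finsupp.mem_support_iff.1 hk)
      have h4 : m j + m k ≤ m.sum fun _ e => e := h3
      omega
    have heq : m = Finsupp.single j (m j) := Finsupp.support_subset_singleton.1 hsub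
    have hs : (m.sum fun _ e => e) = m j := by
      conv_lhs => rw [heq, Finsupp.sum_single_index (by rfl)]
    exact ⟨j, by rw [heq]; congr 1; omega⟩

lemma aux_affine_decomp {R : Type} [CommSemiring R] (p : MvPolynomial ℕ R)
    (hp : p.totalDegree ≤ 1) (S : Finset ℕ) (hS : ∀ k ∈ p.vars, k ∈ S) :
    p = C (coeff 0 p) + ∑ k ∈ S, C (coeff (Finsupp.single k 1) p) * X k := by
  classical
  apply MvPolynomial.ext
  intro m
  rw [coeff_add, coeff_C, MvPolynomial.coeff_sum]
  simp only [coeff_C_mul, coeff_X']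
  by_cases hm0 : m = 0
  · subst hm0
    rw [if_pos rfl, Finset.sum_eq_zero, add_zero]
    intro k _
    rw [if_neg (by simp [Finsupp.single_eq_zero]), mul_zero]
  · rw [if_neg (fun h => hm0 h.symm), zero_add]
    by_cases hm1 : ∃ j, m = Finsupp.single j 1
    · obtain ⟨j, rfl⟩ := hm1
      by_cases hjS : j ∈ S
      · rw [Finset.sum_eq_single j]
        · rw [if_pos rfl, mul_one]
        · intro k _ hkj
          rw [if_neg (fun h => hkj ((Finsupp.single_left_inj one_ne_zero).1 h)), mul_zero]
        · exact fun h => absurd hjS h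
      · have hjv : j ∉ p.vars := fun h => hjS (hS j h)
        have hc0 : coeff (Finsupp.single j 1) p = 0 := by
          by_contra hc
          apply hjv
          rw [mem_vars]
          exact ⟨Finsupp.single j 1, mem_support_iff.2 hc, by simp⟩
        rw [hc0, Finset.sum_eq_zero]
        intro k hk
        rw [if_neg, mul_zero]
        intro h
        exact hjS ((Finsupp.single_left_inj one_ne_zero).1 h ▸ hk)
    · have hc0 : coeff m p = 0 := by
        by_contra hc
        have hmem := mem_support_iff.2 hc
        have hle := le_trans (le_totalDegree hmem) hp
        rcases aux_finsupp_deg_le_one m hle with h0 | ⟨j, hj⟩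
        · exact hm0 h0
        · exact hm1 ⟨j, hj⟩
      rw [hc0, Finset.sum_eq_zero]
      intro k _
      rw [if_neg (fun h => hm1 ⟨k, h.symm⟩), mul_zero]

/-- Formula for an affine polynomial `c₀ + ∑_{k<N} c_k x_k`. -/
def affineFormula {F : Type} (c₀ : F) (c : ℕ → F) : ℕ → Formula F
  | 0 => Formula.const c₀
  | N + 1 => Formula.add (affineFormula c₀ c N) (Formula.mul (Formula.const (c N)) (Formula.var N))

lemma affineFormula_size {F : Type} (c₀ : F) (c : ℕ → F) (N : ℕ) :
    (affineFormula c₀ c N).size = 2 * N := by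
  induction N with
  | zero => rfl
  | succ N ih => simp [affineFormula, Formula.size, ih]; omega

lemma affineFormula_eval {F : Type} [CommSemiring F] (c₀ : F) (c : ℕ → F) (N : ℕ) :
    (affineFormula c₀ c N).eval = C c₀ + ∑ k ∈ Finset.range N, C (c k) * X k := by
  induction N with
  | zero => simp [affineFormula, Formula.eval]
  | succ N ih => rw [Finset.sum_range_succ]; simp [affineFormula, Formula.eval, ih, add_assoc]

/-- Formula for a product of a list of formulas. -/
def prodF {F : Type} [CommSemiring F] : List (Formula F) → Formula F
  | [] => Formula.const 1
  | φ :: l => Formula.mul φ (prodF l)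

lemma prodF_size {F : Type} [CommSemiring F] (l : List (Formula F)) :
    (prodF l).size = (l.map Formula.size).sum + l.length := by
  induction l with
  | nil => rfl
  | cons φ l ih => simp [prodF, Formula.size, ih]; omega

lemma prodF_eval {F : Type} [CommSemiring F] (l : List (Formula F)) :
    (prodF l).eval = (l.map Formula.eval).prod := by
  induction l with
  | nil => simp [prodF, Formula.eval]
  | cons φ l ih => simp [prodF, Formula.eval, ih]

lemma aux_entry_prod {R : Type} [CommSemiring R] (l : List (Matrix (Fin 1) (Fin 1) R)) :
    l.prod 0 0 = (l.map (fun A => A 0 0)).prod := by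
  induction l with
  | nil => simp [Matrix.one_apply_eq]
  | cons A l ih => simp [Matrix.mul_apply, Fin.sum_univ_one, ih]

/-- Entry of a width-1 ABP as a product. -/
lemma aux_abp1 {F : Type} [CommSemiring F] {s' : ℕ} (v w : Fin 1 → F)
    (M : Fin s' → Matrix (Fin 1) (Fin 1) (MvPolynomial ℕ F)) :
    dotProduct (fun a => C (v a))
      (Matrix.mulVec (List.ofFn M).prod fun a => C (w a)) =
    C (v 0) * ((∏ i, M i 0 0) * C (w 0)) := by
  have hdet : (List.ofFn M).prod 0 0 = ∏ i, M i 0 0 := by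
    rw [aux_entry_prod, List.map_ofFn, List.prod_ofFn]
    rfl
  simp only [dotProduct, Matrix.mulVec, Fin.sum_univ_one, hdet]

lemma aux_hcSum_zero {F : Type} [CommSemiring F] (g : MvPolynomial ℕ F) :
    hcSum 0 g = g := by
  unfold hcSum
  rw [Fintype.sum_unique]
  simp only [Nat.not_lt_zero, dif_neg, not_false_eq_true, Nat.sub_zero]
  exact aeval_X_left_apply g

end Aux


lemma aux_phi_affine (N : ℕ) (p : MvPolynomial ℕ (ZMod 2)) (hp : p.totalDegree ≤ 1) :
    MvPolynomial.aeval (fun k : ℕ => if k < N then X k else 0) p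
      = C (coeff 0 p) + ∑ k ∈ Finset.range N, C (coeff (Finsupp.single k 1) p) * X k := by
  classical
  conv_lhs => rw [aux_affine_decomp p hp (p.vars ∪ Finset.range N)
    (fun k hk => Finset.mem_union_left _ hk)]
  rw [map_add, map_sum]
  simp only [map_mul, aeval_C, aeval_X, algebraMap_eq]
  congr 1
  rw [← Finset.sum_subset (Finset.subset_union_right)]
  · apply Finset.sum_congr rfl
    intro k hk
    rw [if_pos (Finset.mem_range.1 hk)]
  · intro k _ hk
    rw [if_neg (fun h => hk (Finset.mem_range.2 h)), mul_zero]

lemma aux_vpk1_subset_vpe : VPkClass (ZMod 2) 1 IsGenForm ⊆ VPe (ZMod 2) := by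
  rintro g ⟨hfam, s, hs, habp⟩
  refine ⟨hfam, ?_⟩
  obtain ⟨v, hv, hvars⟩ := hfam
  refine ⟨fun n => s n * (2 * v n + 1) + 2, ?_, ?_⟩
  · obtain ⟨a, ha⟩ := hs
    obtain ⟨bb, hb⟩ := hv
    refine ⟨a + bb + 3, fun n => ?_⟩
    have h1 : 1 ≤ (n + 2) ^ a := Nat.one_le_pow _ _ (by omega)
    have h2 : 1 ≤ (n + 2) ^ bb := Nat.one_le_pow _ _ (by omega)
    have h3 : 8 ≤ (n + 2) ^ 3 := by
      calc (8 : ℕ) = 2 ^ 3 := by norm_num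
      _ ≤ (n + 2) ^ 3 := Nat.pow_le_pow_left (by omega) 3
    have ha' := ha n
    have hb' := hb n
    calc s n * (2 * v n + 1) + 2
        ≤ (n + 2) ^ a * (2 * (n + 2) ^ bb + 1) + 2 := by
          apply Nat.add_le_add_right
          exact Nat.mul_le_mul ha' (by omega)
      _ ≤ (n + 2) ^ a * (n + 2) ^ bb * 8 := by nlinarith
      _ ≤ (n + 2) ^ a * (n + 2) ^ bb * (n + 2) ^ 3 := by
          exact Nat.mul_le_mul_left _ h3
      _ = (n + 2) ^ (a + bb + 3) := by rw [pow_add, pow_add]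
  · intro n
    obtain ⟨s', hs'le, vv, ww, M, hform, heq⟩ := habp n
    classical
    set φ : MvPolynomial ℕ (ZMod 2) →ₐ[ZMod 2] MvPolynomial ℕ (ZMod 2) :=
      MvPolynomial.aeval (fun k : ℕ => if k < v n then X k else 0) with hφ
    have hfix : φ (g n) = g n := by
      have := MvPolynomial.hom_congr_vars (f₁ := φ.toRingHom)
        (f₂ := RingHom.id (MvPolynomial ℕ (ZMod 2)))
        (p₁ := g n) (p₂ := g n) ?_ ?_ rfl
      · exact this
      · ext1 a
        simp [hφ, algebraMap_eq]
      · intro i hi _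
        simp only [hφ, AlgHom.toRingHom_eq_coe, RingHom.coe_coe, aeval_X, RingHom.id_apply]
        rw [if_pos (hvars n i hi)]
    set Φ : Formula (ZMod 2) :=
      Formula.mul (Formula.mul (Formula.const (vv 0))
        (prodF (List.ofFn (fun i : Fin s' =>
          affineFormula (coeff 0 (M i 0 0)) (fun k => coeff (Finsupp.single k 1) (M i 0 0)) (v n)))))
        (Formula.const (ww 0)) with hΦ
    refine ⟨Φ, ?_, ?_⟩
    · rw [hΦ]
      simp only [Formula.size, prodF_size, List.map_ofFn]
      rw [List.sum_ofFn]
      simp only [Function.comp, affineFormula_size, List.length_ofFn]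
      rw [Finset.sum_const, Finset.card_univ, Fintype.card_fin, smul_eq_mul]
      have hvle : s' * (2 * v n) + s' + 2 ≤ s n * (2 * v n + 1) + 2 := by
        have : s' * (2 * v n) + s' = s' * (2 * v n + 1) := by ring
        rw [this]
        exact Nat.add_le_add_right (Nat.mul_le_mul_right _ hs'le) 2
      omega
    · rw [hΦ]
      simp only [Formula.eval, prodF_eval, List.map_ofFn]
      rw [List.prod_ofFn]
      simp only [Function.comp_def]
      have heval : ∀ i : Fin s',
          Formula.eval ((fun i : Fin s' =>
            affineFormula (coeff 0 (M i 0 0)) (fun k => coeff (Finsupp.single k 1) (M i 0 0)) (v n)) i)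
          = φ (M i 0 0) := by
        intro i
        rw [affineFormula_eval, hφ, aux_phi_affine _ _ (hform i 0 0)]
      rw [Finset.prod_congr rfl (fun i _ => heval i)]
      conv_rhs => rw [← hfix, heq, aux_abp1]
      rw [map_mul, map_mul, map_prod]
      have hC : ∀ a : ZMod 2, φ (C a) = C a := by
        intro a
        simp [hφ, algebraMap_eq]
      rw [hC, hC]
      ring

lemma aux_nclosure_mono {F : Type} [CommSemiring F]
    {Cl₁ Cl₂ : Set (ℕ → MvPolynomial ℕ F)} (h : Cl₁ ⊆ Cl₂) :
    Nclosure Cl₁ ⊆ Nclosure Cl₂ := by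
  rintro f ⟨hfam, g, hg, rest⟩
  exact ⟨hfam, g, h hg, rest⟩



/-- The joint evaluation used for the hypercube-sum argument. -/
def auxTau (P : ℕ) (x y : ZMod 2) (b : Fin P → ZMod 2) : ℕ → ZMod 2 :=
  fun k => if h : k < P then b ⟨k, h⟩ else if k = P then x else if k = P + 1 then y else 0

lemma aux_eval_affine (P : ℕ) (x y : ZMod 2) (b : Fin P → ZMod 2)
    (l : MvPolynomial ℕ (ZMod 2)) (h : l.totalDegree ≤ 1) :
    MvPolynomial.eval (auxTau P x y b) l
      = coeff 0 l + coeff (Finsupp.single P 1) l * x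
        + coeff (Finsupp.single (P + 1) 1) l * y
        + ∑ j : Fin P, coeff (Finsupp.single (j : ℕ) 1) l * b j := by
  classical
  conv_lhs => rw [aux_affine_decomp l h (l.vars ∪ Finset.range (P + 2))
    (fun k hk => Finset.mem_union_left _ hk)]
  rw [map_add, eval_C, map_sum]
  simp only [map_mul, eval_C, eval_X]
  rw [← Finset.sum_subset Finset.subset_union_right]
  · rw [Finset.sum_range_succ, Finset.sum_range_succ]
    have hP : auxTau P x y b P = x := by
      simp [auxTau]
    have hP1 : auxTau P x y b (P + 1) = y := by
      have h1 : ¬ (P + 1 < P) := by omega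
      have h2 : ¬ (P + 1 = P) := by omega
      simp [auxTau, h1, h2]
    rw [hP, hP1]
    have hrange : ∑ k ∈ Finset.range P, coeff (Finsupp.single k 1) l * auxTau P x y b k
        = ∑ j : Fin P, coeff (Finsupp.single (j : ℕ) 1) l * b j := by
      rw [← Fin.sum_univ_eq_sum_range (fun k => coeff (Finsupp.single k 1) l * auxTau P x y b k) P]
      apply Finset.sum_congr rfl
      intro j _
      congr 1
      simp [auxTau, j.isLt]
    rw [hrange]
    ring
  · intro k hk hk2
    have hge : ¬ k < P + 2 := fun h2 => hk2 (Finset.mem_range.2 h2)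
    have h1 : ¬ (k < P) := by omega
    have h2 : ¬ (k = P) := by omega
    have h3 : ¬ (k = P + 1) := by omega
    simp [auxTau, h1, h2, h3]

lemma aux_eval_aeval (sg : ℕ → MvPolynomial ℕ (ZMod 2)) (e : ℕ → ZMod 2)
    (G : MvPolynomial ℕ (ZMod 2)) :
    MvPolynomial.eval e (MvPolynomial.aeval sg G)
      = MvPolynomial.eval (fun k => MvPolynomial.eval e (sg k)) G := by
  rw [MvPolynomial.aeval_def, MvPolynomial.eval₂_comp_left (MvPolynomial.eval e)]
  have hid : (MvPolynomial.eval e).comp (algebraMap (ZMod 2) (MvPolynomial ℕ (ZMod 2)))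
      = RingHom.id (ZMod 2) := by
    ext1 a
    simp [algebraMap_eq]
  rw [hid, MvPolynomial.eval₂_id]
  rfl

/-- The Bool–F₂ equivalence. -/
def auxBoolEquiv : Bool ≃ ZMod 2 where
  toFun := fun bo => if bo then 1 else 0
  invFun := fun z => z = 1
  left_inv := by decide
  right_inv := by decide


lemma aux_part1 : ¬ ∃ (n m : ℕ) (α₀ α₁ α₂ : Fin m → ZMod 2) (β : Fin m → Fin n → ZMod 2),
      ∀ x y : ZMod 2,
        1 + x * y =
          ∑ b : Fin n → ZMod 2, ∏ i : Fin m,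
            (α₀ i + α₁ i * x + α₂ i * y + ∑ j : Fin n, β i j * b j) := by
  rintro ⟨n, m, α₀, α₁, α₂, β, H⟩
  classical
  set L : (Fin n → ZMod 2) → Fin m → ZMod 2 := fun b i => ∑ j, β i j * b j with hL
  set c : ZMod 2 → ZMod 2 → Fin m → ZMod 2 := fun x y i => 1 + α₀ i + α₁ i * x + α₂ i * y with hc
  have hadd : ∀ b b' : Fin n → ZMod 2, L (b + b') = L b + L b' := by
    intro b b'
    funext i
    simp [hL, mul_add, Finset.sum_add_distrib]
  have prodite : ∀ (f : Fin m → ZMod 2), (∏ i, f i) = if (∀ i, f i = 1) then 1 else 0 := by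
    intro f
    by_cases h : ∀ i, f i = 1
    · rw [if_pos h, Finset.prod_eq_one (fun i _ => h i)]
    · rw [if_neg h]
      push_neg at h
      obtain ⟨i, hi⟩ := h
      refine Finset.prod_eq_zero (Finset.mem_univ i) ?_
      revert hi; generalize f i = z; revert z; decide
  have key : ∀ x y : ZMod 2, 1 + x * y = ∑ b : Fin n → ZMod 2, if L b = c x y then 1 else 0 := by
    intro x y
    rw [H x y]
    apply Finset.sum_congr rfl
    intro b _
    rw [prodite]
    refine if_congr ?_ rfl rfl
    have comp : ∀ i, α₀ i + α₁ i * x + α₂ i * y + L b i = 1 ↔ L b i = c x y i := by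
      intro i
      simp only [hc]
      generalize α₀ i = a; generalize α₁ i = a1; generalize α₂ i = a2
      generalize L b i = t
      revert a a1 a2 t x y; decide
    constructor
    · intro h; funext i; exact (comp i).1 (h i)
    · intro h i; exact (comp i).2 (congrFun h i)
  by_cases hinj : Function.Injective L
  · have claim1 : ∀ cc, (∑ b : Fin n → ZMod 2, if L b = cc then 1 else 0) = (1 : ZMod 2) →
        ∃ b, L b = cc := by
      intro cc h
      by_contra hno
      push_neg at hno
      rw [Finset.sum_eq_zero (fun b _ => if_neg (hno b))] at h
      exact one_ne_zero h.symm
    have claim2 : ∀ cc (b0 : Fin n → ZMod 2), L b0 = cc →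
        (∑ b : Fin n → ZMod 2, if L b = cc then 1 else 0) = (1 : ZMod 2) := by
      intro cc b0 hb0
      have hcg : ∀ b : Fin n → ZMod 2, (if L b = cc then (1:ZMod 2) else 0) = if b = b0 then 1 else 0 := by
        intro b
        refine if_congr ?_ rfl rfl
        constructor
        · intro h; exact hinj (h.trans hb0.symm)
        · rintro rfl; exact hb0
      rw [Finset.sum_congr rfl (fun b _ => hcg b),
        Finset.sum_ite_eq' Finset.univ b0 (fun _ => (1:ZMod 2)),
        if_pos (Finset.mem_univ b0)]
    have e1 : (∑ b : Fin n → ZMod 2, if L b = c 0 0 then (1:ZMod 2) else 0) = 1 := by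
      rw [← key 0 0]; norm_num
    have e2 : (∑ b : Fin n → ZMod 2, if L b = c 1 0 then (1:ZMod 2) else 0) = 1 := by
      rw [← key 1 0]; norm_num
    have e3 : (∑ b : Fin n → ZMod 2, if L b = c 0 1 then (1:ZMod 2) else 0) = 1 := by
      rw [← key 0 1]; norm_num
    obtain ⟨b1, hb1⟩ := claim1 _ e1
    obtain ⟨b2, hb2⟩ := claim1 _ e2
    obtain ⟨b3, hb3⟩ := claim1 _ e3
    have hsum : L (b1 + b2 + b3) = c 1 1 := by
      rw [hadd, hadd, hb1, hb2, hb3]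
      funext i
      simp only [hc, Pi.add_apply]
      generalize α₀ i = a; generalize α₁ i = a1; generalize α₂ i = a2
      revert a a1 a2; decide
    have hfin := claim2 _ _ hsum
    rw [← key 1 1] at hfin
    revert hfin; decide
  · rw [Function.not_injective_iff] at hinj
    obtain ⟨b1, b2, heq, hne⟩ := hinj
    set k : Fin n → ZMod 2 := b1 - b2 with hk
    have hk0 : L k = 0 := by
      have hbk : b2 + k = b1 := by funext j; simp [hk]
      have h2 := hadd b2 k
      rw [hbk, heq] at h2
      funext i
      have h3 := congrFun h2 i
      simp only [Pi.add_apply, Pi.zero_apply] at h3 ⊢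
      revert h3
      generalize L b2 i = u; generalize L k i = t
      revert u t; decide
    have hkne : k ≠ 0 := sub_ne_zero.2 hne
    have hzero : ∀ cc, (∑ b : Fin n → ZMod 2, if L b = cc then 1 else 0) = (0 : ZMod 2) := by
      intro cc
      apply Finset.sum_involution (g := fun b _ => b + k)
      · intro b _
        have hLk : L (b + k) = L b := by rw [hadd, hk0, add_zero]
        rw [hLk]
        generalize (if L b = cc then (1:ZMod 2) else 0) = z
        revert z; decide
      · intro b _ _ h
        apply hkne
        have h2 := congrArg (fun f => f - b) h
        simpa using h2
      · intro b _; exact Finset.mem_univ _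
      · intro b _
        funext j
        simp only [Pi.add_apply]
        rw [add_assoc]
        have : k j + k j = 0 := by generalize k j = z; revert z; decide
        rw [this, add_zero]
    have hfin := (key 0 0).trans (hzero _)
    revert hfin; norm_num


lemma aux_cfam_vars : ∀ i ∈ ((1 : MvPolynomial ℕ (ZMod 2)) + X 0 * X 1).vars, i < 2 := by
  intro i hi
  have h1 := MvPolynomial.vars_add_subset (1 : MvPolynomial ℕ (ZMod 2)) (X 0 * X 1) hi
  rw [MvPolynomial.vars_one] at h1
  simp only [Finset.empty_union] at h1
  have h2 := MvPolynomial.vars_mul (X 0 : MvPolynomial ℕ (ZMod 2)) (X 1) h1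
  rw [MvPolynomial.vars_X, MvPolynomial.vars_X] at h2
  simp only [Finset.mem_union, Finset.mem_singleton] at h2
  omega

lemma aux_cfam_family : IsPolyFamily (fun _ : ℕ => (1 : MvPolynomial ℕ (ZMod 2)) + X 0 * X 1) :=
  ⟨fun _ => 2, ⟨1, fun n => by simpa using Nat.le_add_left 2 n⟩, fun _ i hi => aux_cfam_vars i hi⟩

lemma aux_cfam_mem :
    (fun _ : ℕ => (1 : MvPolynomial ℕ (ZMod 2)) + X 0 * X 1) ∈ Nclosure (VPe (ZMod 2)) := by
  refine ⟨aux_cfam_family, fun _ => (1 : MvPolynomial ℕ (ZMod 2)) + X 0 * X 1, ?_, ?_⟩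
  · refine ⟨aux_cfam_family, fun _ => 2, ⟨1, fun n => by simpa using Nat.le_add_left 2 n⟩, fun n => ?_⟩
    refine ⟨Formula.add (Formula.const 1) (Formula.mul (Formula.var 0) (Formula.var 1)), ?_, ?_⟩
    · simp [Formula.size]
    · simp [Formula.eval]
  · refine ⟨fun _ => 0, fun _ => 0, ⟨0, fun n => by simp⟩, ⟨0, fun n => by simp⟩, fun n => ?_⟩
    exact (aux_hcSum_zero _).symm



lemma aux_not_in :
    (fun _ : ℕ => (1 : MvPolynomial ℕ (ZMod 2)) + X 0 * X 1) ∉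
      Nclosure (VPkClass (ZMod 2) 1 IsGenForm) := by
  intro hmem
  classical
  obtain ⟨-, g, ⟨-, s, -, habp⟩, p, q, -, -, hrep⟩ := hmem
  obtain ⟨s', -, vv, ww, M, hform, heq⟩ := habp (q 0)
  have h0 := hrep 0
  set P := p 0 with hP
  set Λ : ℕ → MvPolynomial ℕ (ZMod 2) := fun k =>
    if h : k < s' then M ⟨k, h⟩ 0 0 else if k = s' then C (vv 0) else C (ww 0) with hΛ
  have hΛdeg : ∀ k, (Λ k).totalDegree ≤ 1 := by
    intro k
    by_cases h : k < s'
    · simpa [hΛ, h, IsGenForm] using hform ⟨k, h⟩ 0 0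
    · by_cases h2 : k = s' <;> simp [hΛ, h, h2, totalDegree_C]
  apply aux_part1
  refine ⟨P, s' + 2, fun i => coeff 0 (Λ i), fun i => coeff (Finsupp.single P 1) (Λ i),
    fun i => coeff (Finsupp.single (P + 1) 1) (Λ i),
    fun i j => coeff (Finsupp.single (j : ℕ) 1) (Λ i), ?_⟩
  intro x y
  set exy : ℕ → ZMod 2 := fun k => if k = 0 then x else if k = 1 then y else 0 with hexy
  have hL : MvPolynomial.eval exy ((1 : MvPolynomial ℕ (ZMod 2)) + X 0 * X 1) = 1 + x * y := by
    simp [hexy]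
  have hmain := congrArg (MvPolynomial.eval exy) h0
  rw [hL] at hmain
  rw [hmain]
  unfold hcSum
  rw [map_sum]
  apply Fintype.sum_equiv (Equiv.piCongrRight (fun _ : Fin P => auxBoolEquiv))
  intro bb
  have hbz : ∀ j : Fin P, (Equiv.piCongrRight (fun _ : Fin P => auxBoolEquiv)) bb j
      = if bb j then 1 else 0 := fun j => rfl
  have hcomp : MvPolynomial.eval exy
      (MvPolynomial.aeval (fun i : ℕ =>
        if h : i < P then (if bb ⟨i, h⟩ then 1 else 0) else X (i - P)) (g (q 0)))
      = MvPolynomial.eval (auxTau P x y (fun j => if bb j then 1 else 0)) (g (q 0)) := by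
    rw [aux_eval_aeval]
    have harg : (fun k => MvPolynomial.eval exy
        (if h : k < P then (if bb ⟨k, h⟩ then 1 else 0) else X (k - P)))
        = auxTau P x y (fun j => if bb j then 1 else 0) := by
      funext k
      by_cases h : k < P
      · simp only [auxTau, dif_pos h]
        split <;> simp
      · simp only [auxTau, dif_neg h]
        by_cases h2 : k = P
        · subst h2
          simp [hexy, Nat.sub_self]
        · by_cases h3 : k = P + 1
          · subst h3
            have hs1 : P + 1 - P = 1 := by omega
            simp [hexy, hs1]
          · have h4 : k - P ≠ 0 := by omega
            have h5 : k - P ≠ 1 := by omega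
            simp [hexy, h4, h5, h2, h3]
    rw [harg]
  rw [hcomp]
  set τ : ℕ → ZMod 2 := auxTau P x y (fun j => if bb j then 1 else 0) with hτ
  have hfac : ∀ i : Fin (s' + 2),
      (coeff 0 (Λ i) + coeff (Finsupp.single P 1) (Λ i) * x
        + coeff (Finsupp.single (P + 1) 1) (Λ i) * y
        + ∑ j : Fin P, coeff (Finsupp.single (j : ℕ) 1) (Λ i)
            * (Equiv.piCongrRight (fun _ : Fin P => auxBoolEquiv)) bb j)
      = MvPolynomial.eval τ (Λ i) := by
    intro i
    simp only [hbz]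
    rw [hτ, aux_eval_affine P x y _ (Λ i) (hΛdeg i)]
  rw [Finset.prod_congr rfl (fun i _ => hfac i)]
  rw [heq, aux_abp1, map_mul, map_mul, eval_C, eval_C, map_prod]
  have hprod : ∏ i : Fin (s' + 2), MvPolynomial.eval τ (Λ (i : ℕ))
      = (vv 0 * ((∏ i : Fin s', MvPolynomial.eval τ (M i 0 0)) * ww 0)) := by
    rw [Fin.prod_univ_eq_prod_range (fun k => MvPolynomial.eval τ (Λ k)) (s' + 2)]
    rw [Finset.prod_range_succ, Finset.prod_range_succ]
    have hΛ1 : Λ (s' + 1) = C (ww 0) := by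
      have h1 : ¬ (s' + 1 < s') := by omega
      have h2 : ¬ (s' + 1 = s') := by omega
      simp [hΛ, h1, h2]
    have hΛ2 : Λ s' = C (vv 0) := by simp [hΛ]
    rw [hΛ1, hΛ2, eval_C, eval_C]
    have hmid : ∏ k ∈ Finset.range s', MvPolynomial.eval τ (Λ k)
        = ∏ i : Fin s', MvPolynomial.eval τ (M i 0 0) := by
      rw [← Fin.prod_univ_eq_prod_range (fun k => MvPolynomial.eval τ (Λ k)) s']
      apply Finset.prod_congr rfl
      intro i _
      congr 1
      simp [hΛ, i.isLt]
    rw [hmid]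
    ring
  rw [hprod]


/-- over `F₂`, the function `(x, y) ↦ 1 + x·y` is not a hypercube sum of a
product of affine linear forms; consequently `VNP_1(F₂) ⊊ VNP(F₂)`. -/
theorem statement19 :
    (¬ ∃ (n m : ℕ) (α₀ α₁ α₂ : Fin m → ZMod 2) (β : Fin m → Fin n → ZMod 2),
      ∀ x y : ZMod 2,
        1 + x * y =
          ∑ b : Fin n → ZMod 2, ∏ i : Fin m,
            (α₀ i + α₁ i * x + α₂ i * y + ∑ j : Fin n, β i j * b j)) ∧
    Nclosure (VPkClass (ZMod 2) 1 IsGenForm) ⊂ Nclosure (VPe (ZMod 2)) := by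
  constructor
  · exact aux_part1
  · rw [Set.ssubset_def]
    exact ⟨aux_nclosure_mono aux_vpk1_subset_vpe,
      fun hcon => aux_not_in (hcon aux_cfam_mem)⟩

end
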